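/- Under the sequential multivariate phase-type model, the marginal density of Y_k is f_{Y_k}(t) = γ_k·exp(A_k t)·(−A_k𝟏), where γ_k = α(−A₁)^{−1}D₁(−A₂)^{−1}D₂ ⋯ (−A_{k−1})^{−1}D_{k−1}; that is, Y_k ~ PH(γ_k, A_k). -/

import Mathlib

open Matrix MeasureTheory Filter

section ExpHelpers

attribute [local instance] Matrix.linftyOpNormedRing Matrix.linftyOpNormedAlgebra

variable {N : ℕ}

/-- entry-times-constant-matrix continuous linear map `M ↦ (M * B) i j`. -/
noncomputable def entryMulCLM (B : Matrix (Fin N) (Fin N) ℝ) (i j : Fin N) :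
    Matrix (Fin N) (Fin N) ℝ →L[ℝ] ℝ where
  toFun M := (M * B) i j
  map_add' x y := by simp [Matrix.add_mul]
  map_smul' c x := by simp [Matrix.smul_mul]
  cont := by
    simp only [Matrix.mul_apply]
    exact continuous_finset_sum _ fun q _ =>
      (continuous_id.matrix_elem i q).mul continuous_const

theorem exp_entry_hasDerivAt (A B : Matrix (Fin N) (Fin N) ℝ) (i j : Fin N) (s : ℝ) :
    HasDerivAt (fun u : ℝ => (NormedSpace.exp (u • A) * B) i j)
      ((NormedSpace.exp (s • A) * A * B) i j) s := by
  have h := hasDerivAt_exp_smul_const A s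
  exact (entryMulCLM B i j).hasFDerivAt.comp_hasDerivAt s h

theorem exp_integral (A : Matrix (Fin N) (Fin N) ℝ) (hinv : IsUnit A.det)
    (hdecay : ∀ i j, Tendsto (fun s : ℝ => (NormedSpace.exp (s • A)) i j) atTop (nhds 0))
    (hnn : ∀ s : ℝ, 0 ≤ s → ∀ i j, 0 ≤ (NormedSpace.exp (s • A)) i j) (i j : Fin N) :
    IntegrableOn (fun s : ℝ => (NormedSpace.exp (s • A)) i j) (Set.Ioi 0) ∧
      ∫ s in Set.Ioi (0:ℝ), (NormedSpace.exp (s • A)) i j = (-A)⁻¹ i j := by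
  have hAA : A * A⁻¹ = 1 := Matrix.mul_nonsing_inv A hinv
  have hderiv : ∀ s ∈ Set.Ici (0:ℝ), HasDerivAt
      (fun u : ℝ => (NormedSpace.exp (u • A) * A⁻¹) i j)
      ((NormedSpace.exp (s • A)) i j) s := by
    intro s _
    have h := exp_entry_hasDerivAt A A⁻¹ i j s
    rwa [Matrix.mul_assoc, hAA, Matrix.mul_one] at h
  have hpos : ∀ s ∈ Set.Ioi (0:ℝ), 0 ≤ (NormedSpace.exp (s • A)) i j :=
    fun s hs => hnn s (le_of_lt hs) i j
  have hlim : Tendsto (fun s : ℝ => (NormedSpace.exp (s • A) * A⁻¹) i j) atTop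
      (nhds 0) := by
    simp only [Matrix.mul_apply]
    have : Tendsto (fun s : ℝ => ∑ q, (NormedSpace.exp (s • A)) i q * A⁻¹ q j) atTop
        (nhds (∑ q : Fin N, 0 * A⁻¹ q j)) :=
      tendsto_finset_sum _ fun q _ => (hdecay i q).mul tendsto_const_nhds
    simpa using this
  have hval := integral_Ioi_of_hasDerivAt_of_nonneg' hderiv hpos hlim
  have hint := integrableOn_Ioi_deriv_of_nonneg' hderiv hpos hlim
  refine ⟨hint, ?_⟩
  rw [hval]
  have h0 : (NormedSpace.exp ((0:ℝ) • A) * A⁻¹) i j = A⁻¹ i j := by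
    rw [zero_smul, NormedSpace.exp_zero, Matrix.one_mul]
  rw [h0]
  have hneg : (-A)⁻¹ = -(A⁻¹) := by
    apply Matrix.inv_eq_right_inv
    rw [Matrix.mul_neg, Matrix.neg_mul, neg_neg, hAA]
  rw [hneg]
  simp

theorem expD_integrable {N P : ℕ} (A : Matrix (Fin N) (Fin N) ℝ)
    (Dm : Matrix (Fin N) (Fin P) ℝ) (hinv : IsUnit A.det)
    (hdecay : ∀ i j, Tendsto (fun s : ℝ => (NormedSpace.exp (s • A)) i j) atTop (nhds 0))
    (hnn : ∀ s : ℝ, 0 ≤ s → ∀ i j, 0 ≤ (NormedSpace.exp (s • A)) i j)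
    (i : Fin N) (j : Fin P) :
    IntegrableOn (fun s : ℝ => (NormedSpace.exp (s • A) * Dm) i j) (Set.Ioi 0) := by
  simp only [Matrix.mul_apply]
  exact integrable_finset_sum _ fun q _ =>
    ((exp_integral A hinv hdecay hnn i q).1.mul_const _)

theorem expD_integral {N P : ℕ} (A : Matrix (Fin N) (Fin N) ℝ)
    (Dm : Matrix (Fin N) (Fin P) ℝ) (hinv : IsUnit A.det)
    (hdecay : ∀ i j, Tendsto (fun s : ℝ => (NormedSpace.exp (s • A)) i j) atTop (nhds 0))
    (hnn : ∀ s : ℝ, 0 ≤ s → ∀ i j, 0 ≤ (NormedSpace.exp (s • A)) i j)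
    (i : Fin N) (j : Fin P) :
    ∫ s in Set.Ioi (0:ℝ), (NormedSpace.exp (s • A) * Dm) i j = ((-A)⁻¹ * Dm) i j := by
  simp only [Matrix.mul_apply]
  rw [integral_finset_sum _ fun q _ => ((exp_integral A hinv hdecay hnn i q).1.mul_const _)]
  refine Finset.sum_congr rfl fun q _ => ?_
  rw [integral_mul_const, (exp_integral A hinv hdecay hnn i q).2]

end ExpHelpers

/-- Iterated left-multiplication of a row vector by a chain of (rectangular) step
matrices `M 0, M 1, …`, yielding a row vector at every intermediate position. -/
noncomputable def chainRow {n : ℕ} (d : Fin (n + 1) → ℕ)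
    (M : (k : Fin n) → Matrix (Fin (d k.castSucc)) (Fin (d k.succ)) ℝ)
    (v0 : Fin (d 0) → ℝ) : (k : Fin (n + 1)) → Fin (d k) → ℝ :=
  Fin.induction v0 (fun k ih => ih ᵥ* M k)

@[simp] theorem chainRow_zero {n : ℕ} (d : Fin (n + 1) → ℕ) (M) (v0 : Fin (d 0) → ℝ) :
    chainRow d M v0 0 = v0 := rfl

@[simp] theorem chainRow_succ {n : ℕ} (d : Fin (n + 1) → ℕ) (M) (v0 : Fin (d 0) → ℝ)
    (j : Fin n) :
    chainRow d M v0 j.succ = (chainRow d M v0 j.castSucc) ᵥ* M j := by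
  simp [chainRow]

def piFin1Equiv (d : Fin 1 → ℕ) : (∀ m : Fin 1, Fin (d m)) ≃ Fin (d 0) where
  toFun p := p 0
  invFun x m := Fin.cast (congrArg d (Subsingleton.elim 0 m)) x
  left_inv p := funext fun m => Fin.cases (Fin.ext rfl) (fun i => i.elim0) m
  right_inv x := Fin.ext rfl

theorem chainRow_shift {n : ℕ} (d : Fin (n + 2) → ℕ)
    (M : (m : Fin (n + 1)) → Matrix (Fin (d m.castSucc)) (Fin (d m.succ)) ℝ)
    (v : Fin (d 0) → ℝ) (j : Fin (n + 1)) :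
    chainRow d M v j.succ
      = chainRow (fun m => d m.succ) (fun m => M m.succ) (v ᵥ* M 0) j := by
  induction j using Fin.induction with
  | zero => rw [chainRow_succ]; rfl
  | succ j ih =>
      rw [chainRow_succ, chainRow_succ]
      show chainRow d M v (j.castSucc).succ ᵥ* M j.succ = _
      rw [ih]

theorem chainRow_last_dot {n : ℕ} (d : Fin (n + 1) → ℕ)
    (M : (m : Fin n) → Matrix (Fin (d m.castSucc)) (Fin (d m.succ)) ℝ)
    (v : Fin (d 0) → ℝ) (w : Fin (d (Fin.last n)) → ℝ) :
    (chainRow d M v (Fin.last n)) ⬝ᵥ w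
      = ∑ p : (∀ m : Fin (n + 1), Fin (d m)),
          v (p 0) * (∏ m : Fin n, M m (p m.castSucc) (p m.succ)) * w (p (Fin.last n)) := by
  induction n with
  | zero =>
      rw [← Equiv.sum_comp (piFin1Equiv d).symm]
      show v ⬝ᵥ w = _
      simp [dotProduct, piFin1Equiv]
  | succ n ih =>
      show (chainRow d M v (Fin.last n).succ) ⬝ᵥ w = _
      rw [chainRow_shift, ih]
      rw [← Equiv.sum_comp (Fin.consEquiv (fun m : Fin (n+2) => Fin (d m)))]
      rw [Fintype.sum_prod_type]
      have hv : ∀ p : (m : Fin (n+1)) → Fin (d m.succ),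
          (v ᵥ* M 0) (p 0) = ∑ x, v x * M 0 x (p 0) := fun p => by
        simp [Matrix.vecMul, dotProduct]
      simp only [hv, Finset.sum_mul]
      rw [Finset.sum_comm]
      refine Finset.sum_congr rfl fun x _ => Finset.sum_congr rfl fun y _ => ?_
      show ((v x * M 0 x (y 0)) * ∏ m : Fin n, M m.succ (y m.castSucc) (y m.succ))
            * w (y (Fin.last n))
          = (v x * ∏ m : Fin (n+1), M m (Fin.cons (α := fun m : Fin (n+2) => Fin (d m)) x y m.castSucc) (Fin.cons (α := fun m : Fin (n+2) => Fin (d m)) x y m.succ))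
            * w (y (Fin.last n))
      rw [Fin.prod_univ_succ]
      show ((v x * M 0 x (y 0)) * ∏ m : Fin n, M m.succ (y m.castSucc) (y m.succ))
            * w (y (Fin.last n))
          = (v x * (M 0 x (y 0) * ∏ m : Fin n, M m.succ (y m.castSucc) (y m.succ)))
            * w (y (Fin.last n))
      ring

theorem chainRow_congr {n : ℕ} (d : Fin (n + 1) → ℕ)
    (M M' : (m : Fin n) → Matrix (Fin (d m.castSucc)) (Fin (d m.succ)) ℝ)
    (v : Fin (d 0) → ℝ) (j : Fin (n + 1))
    (h : ∀ m : Fin n, m.castSucc < j → M m = M' m) :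
    chainRow d M v j = chainRow d M' v j := by
  induction j using Fin.induction with
  | zero => rfl
  | succ j ih =>
      rw [chainRow_succ, chainRow_succ,
        ih (fun m hm => h m (lt_of_lt_of_le hm (Fin.castSucc_lt_succ (i := j)).le)),
        h j (Fin.castSucc_lt_succ (i := j))]

/-- Marginal density of `Y_k` under the sequential multivariate phase-type model:
integrating the joint density `f(y₁,…,yₙ) = α exp(A₁y₁) D₁ ⋯ exp(Aₙyₙ) Dₙ 𝟏` over all
coordinates other than the `k`-th (with the `k`-th coordinate fixed at `t ≥ 0`) yields
`γ_k exp(A_k t)(−A_k 𝟏)`, where `γ_k = α (−A₁)^{−1} D₁ ⋯ (−A_{k−1})^{−1} D_{k−1}`;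
that is, `Y_k ∼ PH(γ_k, A_k)`. -/
theorem stmt_7 (n : ℕ) (d : Fin (n + 2) → ℕ)
    (A : (k : Fin (n + 1)) → Matrix (Fin (d k.castSucc)) (Fin (d k.castSucc)) ℝ)
    (D : (k : Fin (n + 1)) → Matrix (Fin (d k.castSucc)) (Fin (d k.succ)) ℝ)
    (α : Fin (d 0) → ℝ)
    (hα : ∀ i, 0 ≤ α i) (hα1 : α ⬝ᵥ (fun _ => (1 : ℝ)) = 1)
    (hAinv : ∀ k, IsUnit (A k).det)
    (hAdecay : ∀ k, ∀ i j, Tendsto (fun s : ℝ => (NormedSpace.exp (s • A k)) i j) atTop (nhds 0))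
    (hAnn : ∀ k, ∀ s : ℝ, 0 ≤ s → ∀ i j, 0 ≤ (NormedSpace.exp (s • A k)) i j)
    (hDnn : ∀ k, ∀ i j, 0 ≤ D k i j)
    (hD : ∀ k, D k *ᵥ (fun _ => (1 : ℝ)) = -(A k *ᵥ (fun _ => (1 : ℝ))))
    (k : Fin (n + 1)) (t : ℝ) (ht : 0 ≤ t) :
    (∫ g in Set.univ.pi (fun _ : {i : Fin (n + 1) // i ≠ k} => Set.Ioi (0 : ℝ)),
        ((chainRow d
            (fun m => NormedSpace.exp
              ((if h : m = k then t else g ⟨m, h⟩) • A m) * D m)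
            α (Fin.last (n + 1))) ⬝ᵥ (fun _ => (1 : ℝ))))
      = ((chainRow d (fun m => (-(A m))⁻¹ * D m) α k.castSucc) ᵥ*
          NormedSpace.exp (t • A k)) ⬝ᵥ (-(A k *ᵥ (fun _ => (1 : ℝ)))) := by
  have hT : MeasurableSet (Set.univ.pi (fun _ : {i : Fin (n + 1) // i ≠ k} => Set.Ioi (0 : ℝ))) :=
    MeasurableSet.univ_pi fun _ => measurableSet_Ioi
  set G : (m : Fin (n+1)) → Matrix (Fin (d m.castSucc)) (Fin (d m.succ)) ℝ :=
    fun m => (if m = k then NormedSpace.exp (t • A m) else (-(A m))⁻¹) * D m with hGdef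
  -- the indicator-product form of each path term
  set F : (∀ m : Fin (n + 2), Fin (d m)) → ({i : Fin (n + 1) // i ≠ k} → ℝ) → ℝ :=
    fun p g => (α (p 0) * ((NormedSpace.exp (t • A k) * D k) (p k.castSucc) (p k.succ)))
      * ∏ m : {i : Fin (n + 1) // i ≠ k},
          (Set.Ioi (0:ℝ)).indicator
            (fun s => (NormedSpace.exp (s • A m.1) * D m.1) (p m.1.castSucc) (p m.1.succ))
            (g m) with hFdef
  have hpoint : ∀ g : {i : Fin (n + 1) // i ≠ k} → ℝ,
      (Set.univ.pi (fun _ : {i : Fin (n + 1) // i ≠ k} => Set.Ioi (0 : ℝ))).indicator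
        (fun g => (chainRow d
            (fun m => NormedSpace.exp
              ((if h : m = k then t else g ⟨m, h⟩) • A m) * D m)
            α (Fin.last (n + 1))) ⬝ᵥ (fun _ => (1 : ℝ))) g
      = ∑ p : (∀ m : Fin (n + 2), Fin (d m)), F p g := by
    intro g
    by_cases hg : g ∈ Set.univ.pi (fun _ : {i : Fin (n + 1) // i ≠ k} => Set.Ioi (0 : ℝ))
    · rw [Set.indicator_of_mem hg, chainRow_last_dot]
      refine Finset.sum_congr rfl fun p _ => ?_
      rw [hFdef]
      show α (p 0) * (∏ m : Fin (n+1), (NormedSpace.exp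
              ((if h : m = k then t else g ⟨m, h⟩) • A m) * D m) (p m.castSucc) (p m.succ)) * 1 = _
      rw [mul_one, ← Finset.mul_prod_erase Finset.univ _ (Finset.mem_univ k), dif_pos rfl,
        Finset.prod_subtype (Finset.univ.erase k) (p := fun m => m ≠ k) (by simp), ← mul_assoc]
      refine congrArg _ (Finset.prod_congr rfl fun m _ => ?_)
      rw [dif_neg m.2, Set.indicator_of_mem (hg m (Set.mem_univ m))]
    · rw [Set.indicator_of_notMem hg]
      symm
      refine Finset.sum_eq_zero fun p _ => ?_
      have : ∃ m, g m ∉ Set.Ioi (0:ℝ) := by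
        by_contra hh
        push_neg at hh
        exact hg fun m _ => hh m
      obtain ⟨m, hm⟩ := this
      rw [hFdef]
      show _ * (∏ m : {i : Fin (n + 1) // i ≠ k}, _) = (0:ℝ)
      rw [Finset.prod_eq_zero (Finset.mem_univ m) (Set.indicator_of_notMem hm _), mul_zero]
  have hmint : ∀ (p : ∀ m : Fin (n + 2), Fin (d m)) (m : {i : Fin (n+1) // i ≠ k}),
      Integrable ((Set.Ioi (0:ℝ)).indicator
        (fun s => (NormedSpace.exp (s • A m.1) * D m.1) (p m.1.castSucc) (p m.1.succ))) :=
    fun p m => (integrable_indicator_iff measurableSet_Ioi).2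
      (expD_integrable (A m.1) (D m.1) (hAinv m.1) (hAdecay m.1) (hAnn m.1) _ _)
  have hFint : ∀ p, Integrable (F p) := fun p =>
    (Integrable.fintype_prod (fun m => hmint p m)).const_mul _
  have hFval : ∀ p : ∀ m : Fin (n + 2), Fin (d m), ∫ g : {i : Fin (n + 1) // i ≠ k} → ℝ, F p g
      = (α (p 0) * ((NormedSpace.exp (t • A k) * D k) (p k.castSucc) (p k.succ)))
        * ∏ m : {i : Fin (n + 1) // i ≠ k},
            ((-(A m.1))⁻¹ * D m.1) (p m.1.castSucc) (p m.1.succ) := by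
    intro p
    simp only [hFdef]
    rw [MeasureTheory.integral_const_mul]
    rw [MeasureTheory.integral_fintype_prod_volume_eq_prod]
    congr 1
    refine Finset.prod_congr rfl fun m _ => ?_
    rw [integral_indicator measurableSet_Ioi,
      expD_integral (A m.1) (D m.1) (hAinv m.1) (hAdecay m.1) (hAnn m.1)]
  have hGone : ∀ m : Fin (n+1), m ≠ k → (G m) *ᵥ (fun _ => (1:ℝ)) = fun _ => 1 := by
    intro m hm
    have hdet : IsUnit (-(A m)).det := by
      rw [Matrix.det_neg]
      exact (((isUnit_one.neg).pow _).mul (hAinv m))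
    simp only [hGdef, if_neg hm]
    rw [← Matrix.mulVec_mulVec, hD m, ← Matrix.neg_mulVec, Matrix.mulVec_mulVec,
      Matrix.nonsing_inv_mul _ hdet, Matrix.one_mulVec]
  have htel : ∀ j : Fin (n+2), k.succ ≤ j →
      chainRow d G α j ⬝ᵥ (fun _ => (1:ℝ)) = chainRow d G α k.succ ⬝ᵥ (fun _ => (1:ℝ)) := by
    intro j
    induction j using Fin.induction with
    | zero =>
        intro h
        exact absurd (Fin.le_zero_iff.mp h) (Fin.succ_ne_zero k)
    | succ j ih =>
        intro h
        by_cases hkj : k.succ ≤ j.castSucc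
        · have hne : j ≠ k := (Fin.succ_le_castSucc_iff.mp hkj).ne'
          rw [chainRow_succ, ← Matrix.dotProduct_mulVec, hGone j hne]
          exact ih hkj
        · have hjk : j = k := le_antisymm
            (le_of_not_gt fun hlt => hkj (Fin.succ_le_castSucc_iff.mpr hlt))
            (Fin.succ_le_succ_iff.mp h)
          rw [hjk]
  calc (∫ g in Set.univ.pi (fun _ : {i : Fin (n + 1) // i ≠ k} => Set.Ioi (0 : ℝ)),
        ((chainRow d
            (fun m => NormedSpace.exp
              ((if h : m = k then t else g ⟨m, h⟩) • A m) * D m)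
            α (Fin.last (n + 1))) ⬝ᵥ (fun _ => (1 : ℝ))))
      = ∫ g : {i : Fin (n + 1) // i ≠ k} → ℝ, ∑ p : (∀ m : Fin (n + 2), Fin (d m)), F p g := by
        rw [← integral_indicator hT]
        exact integral_congr_ae (Filter.Eventually.of_forall hpoint)
    _ = ∑ p : (∀ m : Fin (n + 2), Fin (d m)), ∫ g : {i : Fin (n + 1) // i ≠ k} → ℝ, F p g :=
        integral_finset_sum _ fun p _ => hFint p
    _ = (chainRow d G α (Fin.last (n+1))) ⬝ᵥ (fun _ => (1:ℝ)) := by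
        rw [chainRow_last_dot]
        refine Finset.sum_congr rfl fun p _ => ?_
        rw [hFval p]
        symm
        show α (p 0) * (∏ m : Fin (n+1), G m (p m.castSucc) (p m.succ)) * 1 = _
        rw [mul_one, ← Finset.mul_prod_erase Finset.univ _ (Finset.mem_univ k),
          Finset.prod_subtype (Finset.univ.erase k) (p := fun m => m ≠ k) (by simp), ← mul_assoc]
        simp only [hGdef]
        simp only [eq_self_iff_true, if_true]
        refine congrArg _ (Finset.prod_congr rfl fun m _ => ?_)
        rw [if_neg m.2]
    _ = ((chainRow d (fun m => (-(A m))⁻¹ * D m) α k.castSucc) ᵥ*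
          NormedSpace.exp (t • A k)) ⬝ᵥ (-(A k *ᵥ (fun _ => (1 : ℝ)))) := by
        rw [htel (Fin.last (n+1)) (Fin.le_last _), chainRow_succ,
          chainRow_congr d G (fun m => (-(A m))⁻¹ * D m) α k.castSucc
            (fun m hm => by
              have : m ≠ k := by
                intro e; subst e
                exact absurd hm (lt_irrefl _)
              simp only [hGdef, if_neg this])]
        simp only [hGdef]
        simp only [eq_self_iff_true, if_true]
        rw [← Matrix.vecMul_vecMul, ← Matrix.dotProduct_mulVec,
          ← Matrix.dotProduct_mulVec, hD k, Matrix.dotProduct_mulVec]
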